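/- Let X be a Banach space, P, Q = I − P complementary bounded projections on X, J₁, J₂ two-sided (not necessarily closed) ideals of B(X) with C₀(X) ⊆ Jᵢ ⊆ C_∞(X) (finite-rank ⊆ Jᵢ ⊆ compact), and L a subalgebra of B(X). If A ∈ L satisfies P A Q ∈ J₁ and Q A P ∈ J₂, and A is invertible in B(X), then P A⁻¹ Q ∈ J₁ and Q A⁻¹ P ∈ J₂. -/

import Mathlib

open Submodule Metric Set

private lemma aux_ring {Λ : Type*} [Ring Λ] (A B P : Λ) (hP : P*P = P)
    (hAB : A*B = 1) (hBA : B*A = 1) :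
    ((1 : Λ) - B*(P*(A*(1-P)) + (1-P)*(A*P))) * (P*(B*(1-P))) =
      -(B*((P*(A*(1-P))) * (B*(1-P)))) ∧
    ((1 : Λ) - B*(P*(A*(1-P)) + (1-P)*(A*P))) * ((1-P)*(B*P)) =
      -(B*(((1-P)*(A*P)) * (B*P))) := by
  have hP' : ∀ x, P*(P*x) = P*x := fun x => by rw [← mul_assoc, hP]
  have hAB' : ∀ x, A*(B*x) = x := fun x => by rw [← mul_assoc, hAB, one_mul]
  have hBA' : ∀ x, B*(A*x) = x := fun x => by rw [← mul_assoc, hBA, one_mul]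
  constructor <;>
  · simp only [mul_add, add_mul, mul_sub, sub_mul, mul_one, one_mul, mul_assoc,
      hP, hAB, hBA, hP', hAB', hBA', neg_sub]
    abel

private lemma sup_closed_fd {X : Type*} [NormedAddCommGroup X] [NormedSpace ℂ X]
    (R : Submodule ℂ X) (hR : IsClosed (R : Set X)) (p : Submodule ℂ X)
    [FiniteDimensional ℂ p] : IsClosed ((R ⊔ p : Submodule ℂ X) : Set X) := by
  haveI : IsClosed (R : Set X) := hR
  haveI : FiniteDimensional ℂ (Submodule.map R.mkQ p) := Module.Finite.map p R.mkQ
  have hcl : IsClosed ((Submodule.map R.mkQ p) : Set (X ⧸ R)) :=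
    Submodule.closed_of_finiteDimensional _
  have hcont : Continuous R.mkQ := by
    refine (LipschitzWith.of_dist_le_mul (K := 1) fun x y => ?_).continuous
    rw [dist_eq_norm, dist_eq_norm, ← map_sub]
    calc ‖R.mkQ (x - y)‖ ≤ ‖x - y‖ := Submodule.Quotient.norm_mk_le (S := R) (x - y)
      _ ≤ ((1:NNReal):ℝ) * ‖x - y‖ := by simp
  have : ((R ⊔ p : Submodule ℂ X) : Set X) = R.mkQ ⁻¹' (Submodule.map R.mkQ p) := by
    rw [← Submodule.comap_map_mkQ]
    rfl
  rw [this]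
  exact hcl.preimage hcont

open Filter Topology

private lemma riesz_pseudo {X : Type*} [NormedAddCommGroup X] [NormedSpace ℂ X]
    [CompleteSpace X] (C : X →L[ℂ] X) (hC : IsCompactOperator C) :
    ∃ E F : X →L[ℂ] X, FiniteDimensional ℂ (LinearMap.range (F : X →ₗ[ℂ] X)) ∧
      E ∘L (1 - C) = 1 - F := by
  classical
  set S : X →L[ℂ] X := 1 - C with hSdef
  have hSx : ∀ x, S x = x - C x := fun x => rfl
  have hCx : ∀ x, C x = x - S x := fun x => by rw [hSx]; abel
  have hK : IsCompact (closure ((C : X →ₗ[ℂ] X) '' closedBall 0 1)) :=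
    hC.isCompact_closure_image_closedBall 1
  set K := closure ((C : X →ₗ[ℂ] X) '' closedBall 0 1) with hKdef
  have hmemK : ∀ x : X, ‖x‖ ≤ 1 → C x ∈ K := fun x hx =>
    subset_closure ⟨x, by simpa [mem_closedBall_zero_iff] using hx, rfl⟩
  set N := LinearMap.ker (S : X →ₗ[ℂ] X) with hNdef
  have hNC : IsClosed (N : Set X) := ContinuousLinearMap.isClosed_ker S
  haveI hNfd : FiniteDimensional ℂ N := by
    apply FiniteDimensional.of_isCompact_closedBall₀ ℂ (r := 1) one_pos
    rw [Topology.IsEmbedding.subtypeVal.isCompact_iff]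
    have himg : ((↑) : N → X) '' closedBall 0 1 = (N : Set X) ∩ closedBall 0 1 := by
      ext x
      constructor
      · rintro ⟨y, hy, rfl⟩
        exact ⟨y.2, by simpa [mem_closedBall_zero_iff] using hy⟩
      · rintro ⟨hx1, hx2⟩
        exact ⟨⟨x, hx1⟩, by simpa [mem_closedBall_zero_iff] using hx2, rfl⟩
    rw [himg]
    apply hK.of_isClosed_subset (hNC.inter Metric.isClosed_closedBall)
    rintro x ⟨hx1, hx2⟩
    have hCxx : C x = x := by
      rw [hCx, show S x = 0 from LinearMap.mem_ker.mp hx1, sub_zero]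
    have := hmemK x (mem_closedBall_zero_iff.mp hx2)
    rwa [hCxx] at this
  obtain ⟨M, hMc, hMcompl⟩ :=
    (Submodule.ClosedComplemented.of_finiteDimensional N).exists_isClosed_isCompl
  have hbound : ∃ c : ℝ, 0 < c ∧ ∀ m ∈ M, c * ‖m‖ ≤ ‖S m‖ := by
    by_contra hcon
    push_neg at hcon
    have hseq : ∀ n : ℕ, ∃ m : X, m ∈ M ∧ ‖m‖ = 1 ∧ ‖S m‖ < 1/(n+1) := by
      intro n
      obtain ⟨m, hmM, hm⟩ := hcon (1/(n+1)) (by positivity)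
      have hm0 : m ≠ 0 := by
        rintro rfl
        simp at hm
      have hmn : ‖m‖ ≠ 0 := norm_ne_zero_iff.mpr hm0
      refine ⟨((‖m‖ : ℂ))⁻¹ • m, M.smul_mem _ hmM, ?_, ?_⟩
      · rw [norm_smul, norm_inv, Complex.norm_real, norm_norm,
          inv_mul_cancel₀ hmn]
      · rw [map_smul, norm_smul, norm_inv, Complex.norm_real, norm_norm]
        calc ‖m‖⁻¹ * ‖S m‖ < ‖m‖⁻¹ * (1/(n+1) * ‖m‖) :=
              mul_lt_mul_of_pos_left hm (by positivity)
          _ = 1/(n+1) := by field_simp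
    choose u huM hu1 huS using hseq
    obtain ⟨l, -, φ, hφ, hφt⟩ := hK.tendsto_subseq (fun n => hmemK (u n) (hu1 n).le)
    have hS0 : Tendsto (fun n => S (u (φ n))) atTop (𝓝 0) := by
      apply squeeze_zero_norm (a := fun n : ℕ => 1/(n+1))
      · intro n
        refine le_trans (huS (φ n)).le (one_div_le_one_div_of_le (by positivity) ?_)
        exact_mod_cast Nat.succ_le_succ hφ.le_apply
      · exact tendsto_one_div_add_atTop_nhds_zero_nat
    have hul : Tendsto (fun n => u (φ n)) atTop (𝓝 l) := by
      have heq : (fun n => u (φ n)) = fun n => S (u (φ n)) + C (u (φ n)) := by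
        funext n
        rw [hSx]
        abel
      rw [heq]
      simpa using hS0.add hφt
    have hlM : l ∈ M := hMc.mem_of_tendsto hul (Eventually.of_forall fun n => huM _)
    have hlN : l ∈ N := by
      refine LinearMap.mem_ker.mpr (tendsto_nhds_unique ?_ hS0)
      exact (S.continuous.tendsto l).comp hul
    have hl0 : l = 0 := Submodule.disjoint_def.mp hMcompl.disjoint l hlN hlM
    have hl1 : ‖l‖ = 1 := by
      refine tendsto_nhds_unique ((continuous_norm.tendsto l).comp hul) ?_
      have : (fun n => ‖u (φ n)‖) = fun _ : ℕ => (1:ℝ) := by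
        funext n
        exact hu1 _
      rw [show ((fun x => ‖x‖) ∘ fun n => u (φ n)) = fun n => ‖u (φ n)‖ from rfl, this]
      exact tendsto_const_nhds
    rw [hl0] at hl1
    simp at hl1
  obtain ⟨c, hc, hcb⟩ := hbound
  set f : M →L[ℂ] X := S.comp M.subtypeL with hfdef
  have hfm : ∀ m : M, f m = S (m : X) := fun m => rfl
  have hfanti : AntilipschitzWith (⟨c, hc.le⟩ : NNReal)⁻¹ f := by
    apply f.antilipschitz_of_bound
    intro x
    have h1 : c * ‖(x : X)‖ ≤ ‖S (x : X)‖ := hcb _ x.2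
    change ‖x‖ ≤ c⁻¹ * ‖f x‖
    calc ‖x‖ = c⁻¹ * (c * ‖(x : X)‖) := by field_simp; rfl
      _ ≤ c⁻¹ * ‖S (x : X)‖ := mul_le_mul_of_nonneg_left h1 (by positivity)
      _ = c⁻¹ * ‖f x‖ := rfl
  haveI : CompleteSpace M := hMc.completeSpace_coe
  have hfr : IsClosed (Set.range f) := hfanti.isClosed_range f.uniformContinuous
  set R := LinearMap.range (f : M →ₗ[ℂ] X) with hRdef
  have hRc : IsClosed (R : Set X) := by
    have : (R : Set X) = Set.range f := by
      ext x
      simp [hRdef, LinearMap.mem_range, Set.mem_range]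
    rw [this]
    exact hfr
  have hSR : ∀ x, S x ∈ R := by
    intro x
    have hx : x ∈ N ⊔ M := by
      rw [hMcompl.sup_eq_top]
      trivial
    obtain ⟨y, hy, z, hz, rfl⟩ := Submodule.mem_sup.mp hx
    have : S (y + z) = f ⟨z, hz⟩ := by
      rw [map_add, show S y = 0 from LinearMap.mem_ker.mp hy, zero_add, hfm]
    rw [this]
    exact LinearMap.mem_range_self _ _
  haveI hQfd : FiniteDimensional ℂ (X ⧸ R) := by
    by_contra hinf
    have hBinf : (Module.Basis.ofVectorSpaceIndex ℂ (X ⧸ R)).Infinite := by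
      by_contra hfin
      rw [Set.not_infinite] at hfin
      haveI := hfin.fintype
      exact hinf (Module.Finite.of_basis (Module.Basis.ofVectorSpace ℂ (X ⧸ R)))
    set emb := hBinf.natEmbedding with hemb
    set v : ℕ → X ⧸ R := fun n => Module.Basis.ofVectorSpace ℂ (X ⧸ R) (emb n) with hvdef
    have hv : LinearIndependent ℂ v :=
      (Module.Basis.ofVectorSpace ℂ (X ⧸ R)).linearIndependent.comp emb emb.injective
    choose w hw using fun n => R.mkQ_surjective (v n)
    set W : ℕ → Submodule ℂ X := fun n => R ⊔ Submodule.span ℂ (w '' Iio n) with hWdef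
    have hWc : ∀ n, IsClosed ((W n : Submodule ℂ X) : Set X) := by
      intro n
      haveI : FiniteDimensional ℂ (Submodule.span ℂ (w '' Iio n)) :=
        FiniteDimensional.span_of_finite ℂ ((Set.finite_Iio n).image w)
      exact sup_closed_fd R hRc _
    have hWmono : Monotone W := monotone_nat_of_le_succ fun n =>
      sup_le_sup_left (Submodule.span_mono (Set.image_mono fun x hx => lt_trans hx (Nat.lt_succ_self n))) _
    have hRW : ∀ n, R ≤ W n := fun n => le_sup_left
    have hwW : ∀ n, w n ∈ W (n + 1) :=
      fun n => Submodule.mem_sup_right (Submodule.subset_span ⟨n, by simp, rfl⟩)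
    have hwnW : ∀ n, w n ∉ W n := by
      intro n hn
      rw [Submodule.mem_sup] at hn
      obtain ⟨y, hy, z, hz, hyz⟩ := hn
      have hz' : R.mkQ z ∈ Submodule.span ℂ (v '' Iio n) := by
        have h1 : R.mkQ z ∈ Submodule.map R.mkQ (Submodule.span ℂ (w '' Iio n)) :=
          Submodule.mem_map_of_mem hz
        rw [Submodule.map_span] at h1
        have himg2 : R.mkQ '' (w '' Iio n) = v '' Iio n := by
          rw [Set.image_image]
          exact Set.image_congr fun k _ => hw k
        rwa [himg2] at h1
      have hvn : v n = R.mkQ z := by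
        have hy0 : R.mkQ y = 0 := by
          rw [Submodule.mkQ_apply]
          exact (Submodule.Quotient.mk_eq_zero R).mpr hy
        rw [← hw n, ← hyz, map_add, hy0, zero_add]
      exact hv.notMem_span_image (s := Iio n) (by simp) (hvn ▸ hz')
    have hy : ∀ n : ℕ, ∃ y : X, y ∈ W (n+1) ∧ ‖y‖ = 1 ∧ ∀ z ∈ W n, (1:ℝ)/2 ≤ ‖y - z‖ := by
      intro n
      set F' : Submodule ℂ (W (n+1)) := (W n).comap (W (n+1)).subtype with hF'
      have hF'c : IsClosed (F' : Set (W (n+1))) := by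
        have : (F' : Set (W (n+1))) = ((↑) : W (n+1) → X) ⁻¹' (W n) := rfl
        rw [this]
        exact (hWc n).preimage continuous_subtype_val
      have hex : ∃ x : W (n+1), x ∉ F' := by
        refine ⟨⟨w n, hwW n⟩, fun hmem => hwnW n ?_⟩
        simpa [hF', Submodule.mem_comap] using hmem
      obtain ⟨x₀, hx₀, hx₀d⟩ := riesz_lemma hF'c hex (show (1:ℝ)/2 < 1 by norm_num)
      have hx0 : (x₀ : X) ≠ 0 := by
        intro h
        exact hx₀ (by rw [show x₀ = 0 from Subtype.ext (by simpa using h)]; exact F'.zero_mem)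
      set t : ℝ := ‖(x₀ : X)‖ with ht
      have htpos : 0 < t := norm_pos_iff.mpr hx0
      refine ⟨((t : ℂ))⁻¹ • (x₀ : X), (W (n+1)).smul_mem _ x₀.2, ?_, ?_⟩
      · rw [norm_smul, norm_inv, Complex.norm_real, norm_norm, inv_mul_cancel₀ htpos.ne']
      · intro z hz
        have hz' : ((t : ℂ) • z) ∈ W n := (W n).smul_mem _ hz
        have hzW : ((t : ℂ) • z) ∈ W (n+1) := hWmono (Nat.le_succ n) hz'
        have hd := hx₀d ⟨(t : ℂ) • z, hzW⟩ (by simpa [hF', Submodule.mem_comap] using hz')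
        have hnorm : ‖x₀ - (⟨(t : ℂ) • z, hzW⟩ : W (n+1))‖ = ‖(x₀ : X) - (t : ℂ) • z‖ := rfl
        have heq : (t : ℂ)⁻¹ • (x₀ : X) - z = (t : ℂ)⁻¹ • ((x₀ : X) - (t : ℂ) • z) := by
          rw [smul_sub, smul_smul, inv_mul_cancel₀ (by exact_mod_cast htpos.ne'), one_smul]
        rw [heq, norm_smul, norm_inv, Complex.norm_real, norm_norm, ← ht]
        have ht2 : (1:ℝ)/2 * t ≤ ‖(x₀ : X) - (t : ℂ) • z‖ := by
          rw [← hnorm]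
          exact hd
        calc (1:ℝ)/2 = t⁻¹ * (1/2 * t) := by field_simp
          _ ≤ t⁻¹ * ‖(x₀ : X) - (t : ℂ) • z‖ :=
              mul_le_mul_of_nonneg_left ht2 (inv_nonneg.mpr htpos.le)
    choose y hyW hy1 hyd using hy
    have hsep : ∀ m n : ℕ, m < n → (1:ℝ)/2 ≤ ‖C (y n) - C (y m)‖ := by
      intro m n hmn
      have hzmem : S (y n) + (y m - S (y m)) ∈ W n := by
        refine Submodule.add_mem _ (hRW n (hSR (y n))) (Submodule.sub_mem _ ?_ (hRW n (hSR (y m))))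
        exact hWmono (Nat.succ_le_of_lt hmn) (hyW m)
      have heq : C (y n) - C (y m) = y n - (S (y n) + (y m - S (y m))) := by
        rw [hCx (y n), hCx (y m)]
        abel
      rw [heq]
      exact hyd n _ hzmem
    obtain ⟨l, -, φ, hφ, hφt⟩ := hK.tendsto_subseq (fun n => hmemK (y n) (hy1 n).le)
    have hcauchy := hφt.cauchySeq
    rw [Metric.cauchySeq_iff] at hcauchy
    obtain ⟨Nn, hNn⟩ := hcauchy (1/2) (by norm_num)
    have h1 := hNn (Nn+1) (Nat.le_succ Nn) Nn le_rfl
    have h2 := hsep (φ Nn) (φ (Nn+1)) (hφ (Nat.lt_succ_self Nn))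
    rw [show ((fun n => C (y n)) ∘ φ) = fun n => C (y (φ n)) from rfl] at h1
    rw [dist_eq_norm] at h1
    exact absurd h1 (not_lt.mpr h2)
  have hRcc : Submodule.ClosedComplemented R :=
    Submodule.ClosedComplemented.of_quotient_finiteDimensional hRc
  obtain ⟨π, hπ⟩ := hRcc
  set g : M →L[ℂ] R := f.codRestrict R (fun m => LinearMap.mem_range_self _ m) with hgdef
  have hgker : LinearMap.ker (g : M →ₗ[ℂ] R) = ⊥ := by
    rw [LinearMap.ker_eq_bot']
    intro m hm
    have hfm0 : f m = 0 := by
      rw [show f m = ((g m : R) : X) from rfl, show g m = 0 from hm]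
      rfl
    have hmN : (m : X) ∈ N := LinearMap.mem_ker.mpr (by show S (m : X) = 0; rw [← hfm m, hfm0])
    exact Subtype.ext (Submodule.disjoint_def.mp hMcompl.disjoint (m : X) hmN m.2)
  have hgrange : LinearMap.range (g : M →ₗ[ℂ] R) = ⊤ := by
    rw [LinearMap.range_eq_top]
    rintro ⟨x, hx⟩
    obtain ⟨m, hm⟩ := hx
    exact ⟨m, Subtype.ext hm⟩
  haveI : CompleteSpace R := hRc.completeSpace_coe
  set e := ContinuousLinearEquiv.ofBijective g hgker hgrange with he
  set E : X →L[ℂ] X := M.subtypeL ∘L ((e.symm : R →L[ℂ] M) ∘L π) with hE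
  set F : X →L[ℂ] X := 1 - E ∘L S with hF
  have hkey : ∀ x, S (E (S x)) = S x := by
    intro x
    have h1 : π (S x) = ⟨S x, hSR x⟩ := hπ ⟨S x, hSR x⟩
    have h2 : ∀ r : R, S (((e.symm r : M) : X)) = (r : X) := by
      intro r
      have h3 : g (e.symm r) = r := e.apply_symm_apply r
      calc S (((e.symm r : M) : X)) = ((g (e.symm r) : R) : X) := rfl
        _ = (r : X) := by rw [h3]
    calc S (E (S x)) = S (((e.symm (π (S x)) : M) : X)) := rfl
      _ = ((π (S x) : R) : X) := h2 _
      _ = S x := by rw [h1]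
  refine ⟨E, F, ?_, ?_⟩
  · haveI : FiniteDimensional ℂ N := hNfd
    apply Submodule.finiteDimensional_of_le (S₂ := N)
    rintro _ ⟨x, rfl⟩
    have hFx : (F : X →ₗ[ℂ] X) x = x - E (S x) := by
      simp [hF, ContinuousLinearMap.sub_apply, ContinuousLinearMap.one_apply,
        ContinuousLinearMap.comp_apply]
    rw [hFx]
    exact LinearMap.mem_ker.mpr (by rw [map_sub]; show S x - S (E (S x)) = 0; rw [hkey, sub_self])
  · calc E ∘L (1 - C) = E ∘L S := by rw [hSdef]
      _ = 1 - F := by rw [hF, sub_sub_cancel]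


/-- Let `X` be a Banach space, `P, Q = I - P` complementary bounded projections on `X`,
`J₁, J₂` two-sided (not necessarily closed) ideals of `B(X)` with
finite-rank ⊆ `Jᵢ` ⊆ compact, and `L` a subalgebra of `B(X)`.  If `A ∈ L` satisfies
`P A Q ∈ J₁` and `Q A P ∈ J₂`, and `A` is invertible in `B(X)` with inverse `B`, then
`P B Q ∈ J₁` and `Q B P ∈ J₂`. -/
theorem inverse_offdiagonal_in_ideal (X : Type*) [NormedAddCommGroup X]
    [NormedSpace ℂ X] [CompleteSpace X]
    (J₁ J₂ : Set (X →L[ℂ] X))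
    (hJ₁fin : ∀ T : X →L[ℂ] X,
      FiniteDimensional ℂ (LinearMap.range (T : X →ₗ[ℂ] X)) → T ∈ J₁)
    (hJ₁cpt : ∀ T ∈ J₁, IsCompactOperator T)
    (hJ₁add : ∀ S ∈ J₁, ∀ T ∈ J₁, S + T ∈ J₁)
    (hJ₁ideal : ∀ (S : X →L[ℂ] X), ∀ T ∈ J₁, S ∘L T ∈ J₁ ∧ T ∘L S ∈ J₁)
    (hJ₂fin : ∀ T : X →L[ℂ] X,
      FiniteDimensional ℂ (LinearMap.range (T : X →ₗ[ℂ] X)) → T ∈ J₂)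
    (hJ₂cpt : ∀ T ∈ J₂, IsCompactOperator T)
    (hJ₂add : ∀ S ∈ J₂, ∀ T ∈ J₂, S + T ∈ J₂)
    (hJ₂ideal : ∀ (S : X →L[ℂ] X), ∀ T ∈ J₂, S ∘L T ∈ J₂ ∧ T ∘L S ∈ J₂)
    (L : Subalgebra ℂ (X →L[ℂ] X))
    (P : X →L[ℂ] X) (hP : P ∘L P = P) (Q : X →L[ℂ] X) (hQ : Q = 1 - P)
    (A : X →L[ℂ] X) (hAL : A ∈ L)
    (h₁ : P ∘L A ∘L Q ∈ J₁) (h₂ : Q ∘L A ∘L P ∈ J₂)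
    (B : X →L[ℂ] X) (hAB : A ∘L B = 1) (hBA : B ∘L A = 1) :
    P ∘L B ∘L Q ∈ J₁ ∧ Q ∘L B ∘L P ∈ J₂ := by
  subst hQ
  have hP' : P * P = P := hP
  have hAB' : A * B = 1 := hAB
  have hBA' : B * A = 1 := hBA
  have h₁' : P * (A * (1 - P)) ∈ J₁ := h₁
  have h₂' : (1 - P) * (A * P) ∈ J₂ := h₂
  set Kop : X →L[ℂ] X := P * (A * (1 - P)) + (1 - P) * (A * P) with hKop
  set Cop : X →L[ℂ] X := B * Kop with hCop
  have hKc : IsCompactOperator (⇑Kop) := (hJ₁cpt _ h₁').add (hJ₂cpt _ h₂')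
  have hCc : IsCompactOperator (⇑Cop) := hKc.continuous_comp B.continuous
  obtain ⟨E, F, hFfd, hEF⟩ := riesz_pseudo Cop hCc
  have hEF' : E * (1 - Cop) = 1 - F := hEF
  have hJ₁neg : ∀ T ∈ J₁, -T ∈ J₁ := fun T hT => by
    have h := (hJ₁ideal (-1) T hT).1
    rwa [show (-1 : X →L[ℂ] X) ∘L T = -T by ext x; simp] at h
  have hJ₂neg : ∀ T ∈ J₂, -T ∈ J₂ := fun T hT => by
    have h := (hJ₂ideal (-1) T hT).1
    rwa [show (-1 : X →L[ℂ] X) ∘L T = -T by ext x; simp] at h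
  obtain ⟨hid₁, hid₂⟩ := aux_ring A B P hP' hAB' hBA'
  constructor
  · set T₁ : X →L[ℂ] X := P * (B * (1 - P)) with hT₁
    have m₁ : (P * (A * (1 - P))) * (B * (1 - P)) ∈ J₁ := (hJ₁ideal (B * (1 - P)) _ h₁').2
    have m₂ : B * ((P * (A * (1 - P))) * (B * (1 - P))) ∈ J₁ := (hJ₁ideal B _ m₁).1
    have m₃ : -(B * ((P * (A * (1 - P))) * (B * (1 - P)))) ∈ J₁ := hJ₁neg _ m₂
    have m₄ : (1 - Cop) * T₁ ∈ J₁ := by rw [hCop, hKop, hT₁, hid₁]; exact m₃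
    have m₅ : E * ((1 - Cop) * T₁) ∈ J₁ := (hJ₁ideal E _ m₄).1
    have m₆ : F * T₁ ∈ J₁ := by
      apply hJ₁fin
      have hle : LinearMap.range ((F * T₁ : X →L[ℂ] X) : X →ₗ[ℂ] X) ≤
          LinearMap.range (F : X →ₗ[ℂ] X) := by
        rw [show ((F * T₁ : X →L[ℂ] X) : X →ₗ[ℂ] X) =
          (F : X →ₗ[ℂ] X) ∘ₗ (T₁ : X →ₗ[ℂ] X) from rfl]
        exact LinearMap.range_comp_le_range _ _
      exact Submodule.finiteDimensional_of_le hle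
    have final : T₁ = E * ((1 - Cop) * T₁) + F * T₁ := by
      have h5 : E * ((1 - Cop) * T₁) = (1 - F) * T₁ := by rw [← mul_assoc, hEF']
      rw [h5, sub_mul, one_mul, sub_add_cancel]
    show T₁ ∈ J₁
    rw [final]
    exact hJ₁add _ m₅ _ m₆
  · set T₂ : X →L[ℂ] X := (1 - P) * (B * P) with hT₂
    have m₁ : ((1 - P) * (A * P)) * (B * P) ∈ J₂ := (hJ₂ideal (B * P) _ h₂').2
    have m₂ : B * (((1 - P) * (A * P)) * (B * P)) ∈ J₂ := (hJ₂ideal B _ m₁).1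
    have m₃ : -(B * (((1 - P) * (A * P)) * (B * P))) ∈ J₂ := hJ₂neg _ m₂
    have m₄ : (1 - Cop) * T₂ ∈ J₂ := by rw [hCop, hKop, hT₂, hid₂]; exact m₃
    have m₅ : E * ((1 - Cop) * T₂) ∈ J₂ := (hJ₂ideal E _ m₄).1
    have m₆ : F * T₂ ∈ J₂ := by
      apply hJ₂fin
      have hle : LinearMap.range ((F * T₂ : X →L[ℂ] X) : X →ₗ[ℂ] X) ≤
          LinearMap.range (F : X →ₗ[ℂ] X) := by
        rw [show ((F * T₂ : X →L[ℂ] X) : X →ₗ[ℂ] X) =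
          (F : X →ₗ[ℂ] X) ∘ₗ (T₂ : X →ₗ[ℂ] X) from rfl]
        exact LinearMap.range_comp_le_range _ _
      exact Submodule.finiteDimensional_of_le hle
    have final : T₂ = E * ((1 - Cop) * T₂) + F * T₂ := by
      have h5 : E * ((1 - Cop) * T₂) = (1 - F) * T₂ := by rw [← mul_assoc, hEF']
      rw [h5, sub_mul, one_mul, sub_add_cancel]
    show T₂ ∈ J₂
    rw [final]
    exact hJ₂add _ m₅ _ m₆
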